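/- Let γ > 0, n ∈ {3,4,5}, and define the linear operator L̄(f) = f'' + γf' - (((n-2)/2)² + γ)f. Let γ₂ > 0 be such that t ↦ e^{((2-n)/2 - γ₂)t} lies in the kernel of L̄ (i.e., ((2-n)/2 - γ₂)² + γ((2-n)/2 - γ₂) = ((n-2)/2)² + γ). For constants c₁ > 0, λ ∈ ℝ, ε > 0 and a(n) = 1/(2(4-n) - γ₁) with γ₁ = ((8-n)/2)γ small, the function h_λ(t) = a(n)c₁ε²e^{(2-n)λ}e^{((n-6)/2)t}(1 - e^{(4-n-γ₂)(t-λ)}) satisfies h_λ(λ) = 0, h_λ(t) ≥ 0 for t ≤ λ, and L̄(h_λ)(t) = c₁ε²e^{((n-6)/2)t}e^{(2-n)λ} for all t. -/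

import Mathlib

lemma barrier_hasDerivAt (C₁ C₂ a b : ℝ) (t : ℝ) :
    HasDerivAt (fun t => C₁ * Real.exp (a * t) + C₂ * Real.exp (b * t))
      (C₁ * a * Real.exp (a * t) + C₂ * b * Real.exp (b * t)) t := by
  have h1 : HasDerivAt (fun t : ℝ => a * t) a t := by
    simpa using (hasDerivAt_id t).const_mul a
  have h2 : HasDerivAt (fun t : ℝ => b * t) b t := by
    simpa using (hasDerivAt_id t).const_mul b
  have := (h1.exp.const_mul C₁).add (h2.exp.const_mul C₂)
  exact this.congr_deriv (by ring)

lemma barrier_deriv (C₁ C₂ a b : ℝ) :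
    deriv (fun t => C₁ * Real.exp (a * t) + C₂ * Real.exp (b * t))
      = fun t => C₁ * a * Real.exp (a * t) + C₂ * b * Real.exp (b * t) := by
  funext t
  exact (barrier_hasDerivAt C₁ C₂ a b t).deriv

/-- Barrier construction for the moving-plane argument: the explicit function
`h_λ` vanishes at `λ`, is nonnegative for `t ≤ λ`, and satisfies
`L̄(h_λ) = c₁ ε² e^{((n-6)/2)t} e^{(2-n)λ}` for
`L̄(f) = f'' + γ f' - (((n-2)/2)² + γ) f`. -/
theorem barrier_construction (n : ℕ) (hn : 3 ≤ n ∧ n ≤ 5)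
    (γ : ℝ) (hγ : 0 < γ)
    (γ₁ : ℝ) (hγ₁ : γ₁ = ((8 - (n : ℝ)) / 2) * γ)
    (γ₂ : ℝ) (hγ₂ : 0 < γ₂)
    (hker : ((2 - (n : ℝ)) / 2 - γ₂) ^ 2 + γ * ((2 - (n : ℝ)) / 2 - γ₂)
      = (((n : ℝ) - 2) / 2) ^ 2 + γ)
    (hsmall : n = 3 → γ₁ < 2 ∧ γ₂ < 1)
    (c₁ : ℝ) (hc₁ : 0 < c₁) (lam : ℝ) (ε : ℝ) (hε : 0 < ε)
    (h : ℝ → ℝ)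
    (hh : ∀ t : ℝ, h t = (1 / (2 * (4 - (n : ℝ)) - γ₁)) * c₁ * ε ^ 2
      * Real.exp ((2 - (n : ℝ)) * lam) * Real.exp ((((n : ℝ) - 6) / 2) * t)
      * (1 - Real.exp ((4 - (n : ℝ) - γ₂) * (t - lam)))) :
    h lam = 0
    ∧ (∀ t : ℝ, t ≤ lam → 0 ≤ h t)
    ∧ (∀ t : ℝ,
        deriv (deriv h) t + γ * deriv h t - ((((n : ℝ) - 2) / 2) ^ 2 + γ) * h t
          = c₁ * ε ^ 2 * Real.exp ((((n : ℝ) - 6) / 2) * t)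
            * Real.exp ((2 - (n : ℝ)) * lam)) := by
  obtain ⟨hn3, hn5⟩ := hn
  set A : ℝ := 1 / (2 * (4 - (n : ℝ)) - γ₁) with hAdef
  -- basic sign facts
  have hεsq : (0 : ℝ) < ε ^ 2 := by positivity
  refine ⟨?_, ?_, ?_⟩
  · rw [hh]; simp
  · intro t ht
    rw [hh]
    interval_cases n
    · -- n = 3
      obtain ⟨hg1, hg2⟩ := hsmall rfl
      have hDpos : (0:ℝ) < 2 * (4 - ((3:ℕ):ℝ)) - γ₁ := by push_cast; linarith
      have hApos : 0 < A := by rw [hAdef]; exact one_div_pos.mpr hDpos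
      have h1 : Real.exp ((4 - ((3:ℕ):ℝ) - γ₂) * (t - lam)) ≤ 1 := by
        rw [Real.exp_le_one_iff]
        push_cast
        nlinarith
      have hfac : 0 ≤ A * c₁ * ε ^ 2 * Real.exp ((2 - ((3:ℕ):ℝ)) * lam)
          * Real.exp (((((3:ℕ):ℝ)) - 6) / 2 * t) := by
        have e1 := Real.exp_pos ((2 - ((3:ℕ):ℝ)) * lam)
        have e2 := Real.exp_pos (((((3:ℕ):ℝ)) - 6) / 2 * t)
        positivity
      exact mul_nonneg hfac (by linarith)
    · -- n = 4
      have hDneg : 2 * (4 - ((4:ℕ):ℝ)) - γ₁ < 0 := by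
        subst hγ₁; push_cast; nlinarith
      have hAneg : A < 0 := by rw [hAdef]; exact one_div_neg.mpr hDneg
      have h1 : 1 ≤ Real.exp ((4 - ((4:ℕ):ℝ) - γ₂) * (t - lam)) := by
        apply Real.one_le_exp
        push_cast
        nlinarith
      have hfac : A * c₁ * ε ^ 2 * Real.exp ((2 - ((4:ℕ):ℝ)) * lam)
          * Real.exp (((((4:ℕ):ℝ)) - 6) / 2 * t) < 0 := by
        apply mul_neg_of_neg_of_pos _ (Real.exp_pos _)
        apply mul_neg_of_neg_of_pos _ (Real.exp_pos _)
        apply mul_neg_of_neg_of_pos _ hεsq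
        exact mul_neg_of_neg_of_pos hAneg hc₁
      exact mul_nonneg_of_nonpos_of_nonpos hfac.le (by linarith)
    · -- n = 5
      have hDneg : 2 * (4 - ((5:ℕ):ℝ)) - γ₁ < 0 := by
        subst hγ₁; push_cast; nlinarith
      have hAneg : A < 0 := by rw [hAdef]; exact one_div_neg.mpr hDneg
      have h1 : 1 ≤ Real.exp ((4 - ((5:ℕ):ℝ) - γ₂) * (t - lam)) := by
        apply Real.one_le_exp
        push_cast
        nlinarith
      have hfac : A * c₁ * ε ^ 2 * Real.exp ((2 - ((5:ℕ):ℝ)) * lam)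
          * Real.exp (((((5:ℕ):ℝ)) - 6) / 2 * t) < 0 := by
        apply mul_neg_of_neg_of_pos _ (Real.exp_pos _)
        apply mul_neg_of_neg_of_pos _ (Real.exp_pos _)
        apply mul_neg_of_neg_of_pos _ hεsq
        exact mul_neg_of_neg_of_pos hAneg hc₁
      exact mul_nonneg_of_nonpos_of_nonpos hfac.le (by linarith)
  · intro t
    -- rewrite h as a sum of two exponentials
    have hfun : h = fun t => (A * c₁ * ε ^ 2 * Real.exp ((2 - (n : ℝ)) * lam)) *
          Real.exp ((((n : ℝ) - 6) / 2) * t)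
        + (-(A * c₁ * ε ^ 2 * Real.exp ((2 - (n : ℝ)) * lam)
            * Real.exp (-(4 - (n : ℝ) - γ₂) * lam))) *
          Real.exp (((2 - (n : ℝ)) / 2 - γ₂) * t) := by
      funext s
      rw [hh s]
      have e1 : Real.exp ((((n : ℝ) - 6) / 2) * s)
          * Real.exp ((4 - (n : ℝ) - γ₂) * (s - lam))
          = Real.exp (-(4 - (n : ℝ) - γ₂) * lam)
            * Real.exp (((2 - (n : ℝ)) / 2 - γ₂) * s) := by
        rw [← Real.exp_add, ← Real.exp_add]
        congr 1
        ring
      linear_combination (-(A * c₁ * ε ^ 2 * Real.exp ((2 - (n : ℝ)) * lam))) * e1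
    rw [hfun, barrier_deriv, barrier_deriv]
    have hD : 2 * (4 - (n : ℝ)) - γ₁ ≠ 0 := by
      interval_cases n
      · obtain ⟨hg1, _⟩ := hsmall rfl
        push_cast; nlinarith
      · subst hγ₁; push_cast; nlinarith
      · subst hγ₁; push_cast; nlinarith
    have hA1 : A * (2 * (4 - (n : ℝ)) - γ₁) = 1 := by
      rw [hAdef]; field_simp
    subst hγ₁
    linear_combination
      (Real.exp (((2 - (n : ℝ)) / 2 - γ₂) * t) *
        (-(A * c₁ * ε ^ 2 * Real.exp ((2 - (n : ℝ)) * lam)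
          * Real.exp (-(4 - (n : ℝ) - γ₂) * lam)))) * hker
      + (Real.exp ((((n : ℝ) - 6) / 2) * t) * c₁ * ε ^ 2
          * Real.exp ((2 - (n : ℝ)) * lam)) * hA1
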